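/- arXiv:2410.10230 — 3 statements merged into one kernel-verified Lean document; each statement's English description precedes it below -/
import Mathlib

section
/- Let Π = {π_θ : θ ∈ Θ} be an exponential family with sufficient statistic T and log-partition function g, and let the prior be π_{θ_p} ∈ Π. For a linear risk function f_η(x) = η·T(x) + C and PAC-Bayes temperature λ > 0, define Catoni's objective Obj(θ) = π_θ[f_η] + λ·KL(π_θ, π_{θ_p}). Then the gradient of Obj with respect to θ equals V_θ(η + λ(θ − θ_p)), where V_θ = Cov_{π_θ}[T] is Fisher's information matrix. Consequently, the update θ̃ = θ_p − λ⁻¹η satisfies θ̃ = θ − λ⁻¹ V_θ⁻¹ ∇Obj(θ) whenever V_θ is invertible. -/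
open MeasureTheory
open scoped RealInnerProductSpace

section Aux

lemma euclid_decomp {d : ℕ} (x : EuclideanSpace ℝ (Fin d)) :
    x = ∑ i, x i • EuclideanSpace.single i 1 := by
  ext j
  rw [WithLp.ofLp_sum, Finset.sum_apply]
  simp [EuclideanSpace.single_apply]

lemma sym_of_entries {d : ℕ} (V : EuclideanSpace ℝ (Fin d) →L[ℝ] EuclideanSpace ℝ (Fin d))
    (hb : ∀ i j : Fin d,
      ⟪(EuclideanSpace.single i 1 : EuclideanSpace ℝ (Fin d)), V (EuclideanSpace.single j 1)⟫ =
      ⟪(EuclideanSpace.single j 1 : EuclideanSpace ℝ (Fin d)), V (EuclideanSpace.single i 1)⟫)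
    (u w : EuclideanSpace ℝ (Fin d)) : ⟪V u, w⟫ = ⟪u, V w⟫ := by
  rw [euclid_decomp u, euclid_decomp w]
  simp only [map_sum, ContinuousLinearMap.map_smul, inner_sum, sum_inner, real_inner_smul_left,
    real_inner_smul_right, Finset.mul_sum]
  refine Finset.sum_congr rfl fun j _ => Finset.sum_congr rfl fun i _ => ?_
  have h2 := hb j i
  rw [real_inner_comm] at h2
  rw [h2]

end Aux

/-- For an exponential family with sufficient statistic `T`,
log-partition `g`, prior `π_{θ_p}`, linear risk `f_η(x) = η·T(x) + C` and
temperature `λ > 0`, Catoni's objective `Obj(θ) = π_θ[f_η] + λ KL(π_θ, π_{θ_p})`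
(with `KL(π_θ, π_{θ_p}) = (θ−θ_p)·∇g(θ) − g(θ) + g(θ_p)`) has gradient
`V_θ (η + λ(θ − θ_p))` where `V_θ = Cov_{π_θ}[T] = ∇²g(θ)` is Fisher's information;
consequently `θ̃ = θ_p − λ⁻¹η` satisfies `θ̃ = θ − λ⁻¹ V_θ⁻¹ ∇Obj(θ)` when `V_θ`
is invertible. -/
theorem stmt4 {X : Type*} [MeasurableSpace X] {d : ℕ}
    (T : X → EuclideanSpace ℝ (Fin d))
    (Θ : Set (EuclideanSpace ℝ (Fin d))) (hΘ : IsOpen Θ)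
    (π : EuclideanSpace ℝ (Fin d) → Measure X)
    (hprob : ∀ θ' ∈ Θ, IsProbabilityMeasure (π θ'))
    (g : EuclideanSpace ℝ (Fin d) → ℝ)
    (hgd : ∀ θ' ∈ Θ, DifferentiableAt ℝ g θ')
    (hintT : ∀ θ' ∈ Θ, Integrable T (π θ'))
    (hL2T : ∀ θ' ∈ Θ, MemLp T 2 (π θ'))
    (hmean : ∀ θ' ∈ Θ, (∫ x, T x ∂(π θ')) = gradient g θ')
    (η : EuclideanSpace ℝ (Fin d)) (C : ℝ) (lam : ℝ) (hlam : 0 < lam)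
    (θ θp : EuclideanSpace ℝ (Fin d)) (hθ : θ ∈ Θ) (hθp : θp ∈ Θ)
    (hgdiff : DifferentiableAt ℝ (gradient g) θ)
    (V : EuclideanSpace ℝ (Fin d) →L[ℝ] EuclideanSpace ℝ (Fin d))
    (hVhess : V = fderiv ℝ (gradient g) θ)
    (hVcov : ∀ i j : Fin d,
      ⟪EuclideanSpace.single i 1, V (EuclideanSpace.single j 1)⟫ =
        (∫ x, T x i * T x j ∂(π θ)) - (∫ x, T x i ∂(π θ)) * (∫ x, T x j ∂(π θ)))
    (Obj : EuclideanSpace ℝ (Fin d) → ℝ)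
    (hObj : ∀ θ', Obj θ' =
      (∫ x, (⟪η, T x⟫ + C) ∂(π θ')) +
        lam * (⟪θ' - θp, gradient g θ'⟫ - g θ' + g θp)) :
    HasGradientAt Obj (V (η + lam • (θ - θp))) θ ∧
      (∀ W : EuclideanSpace ℝ (Fin d) →L[ℝ] EuclideanSpace ℝ (Fin d),
        W.comp V = ContinuousLinearMap.id ℝ _ →
          θp - lam⁻¹ • η = θ - lam⁻¹ • W (V (η + lam • (θ - θp)))) := by
  have hsym : ∀ u w : EuclideanSpace ℝ (Fin d), ⟪V u, w⟫ = ⟪u, V w⟫ := by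
    refine sym_of_entries V (fun i j => ?_)
    have hcomm : (∫ x, T x j * T x i ∂(π θ)) = ∫ x, T x i * T x j ∂(π θ) := by
      congr 1; funext x; ring
    rw [hVcov, hVcov, hcomm]
    ring
  set G := gradient g with hG
  set a : EuclideanSpace ℝ (Fin d) := η + lam • (θ - θp) with ha
  set F : EuclideanSpace ℝ (Fin d) → ℝ :=
    fun θ' => ⟪η + lam • (θ' - θp), G θ'⟫ - lam * g θ' + (C + lam * g θp) with hF
  have hEq : Obj =ᶠ[nhds θ] F := by
    filter_upwards [hΘ.mem_nhds hθ] with θ' hθ'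
    have hpm : IsProbabilityMeasure (π θ') := hprob θ' hθ'
    have hint : Integrable T (π θ') := hintT θ' hθ'
    have h1 : (∫ x, (⟪η, T x⟫ + C) ∂(π θ')) = ⟪η, G θ'⟫ + C := by
      rw [integral_add (hint.const_inner η) (integrable_const C),
        integral_inner hint η, hmean θ' hθ', integral_const]
      simp [hG]
    rw [hObj, h1, hF]
    simp only [inner_add_left, real_inner_smul_left, hG]
    ring
  have hA : HasFDerivAt (fun θ' : EuclideanSpace ℝ (Fin d) => η + lam • (θ' - θp))
      (lam • ContinuousLinearMap.id ℝ (EuclideanSpace ℝ (Fin d))) θ :=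
    (((hasFDerivAt_id θ).sub_const θp).const_smul lam).const_add η
  have hGd : HasFDerivAt G V θ := hVhess ▸ hgdiff.hasFDerivAt
  have hgd' : HasFDerivAt g (InnerProductSpace.toDual ℝ (EuclideanSpace ℝ (Fin d)) (G θ)) θ :=
    (hgd θ hθ).hasGradientAt.hasFDerivAt
  have hFd : HasFDerivAt F
      (((fderivInnerCLM ℝ (η + lam • (θ - θp), G θ)).comp
          ((lam • ContinuousLinearMap.id ℝ (EuclideanSpace ℝ (Fin d))).prod V)) -
        lam • (InnerProductSpace.toDual ℝ (EuclideanSpace ℝ (Fin d)) (G θ))) θ := by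
    exact ((hA.inner ℝ hGd).sub (hgd'.const_mul lam)).add_const (C + lam * g θp)
  have hL : (((fderivInnerCLM ℝ (η + lam • (θ - θp), G θ)).comp
          ((lam • ContinuousLinearMap.id ℝ (EuclideanSpace ℝ (Fin d))).prod V)) -
        lam • (InnerProductSpace.toDual ℝ (EuclideanSpace ℝ (Fin d)) (G θ))) =
      InnerProductSpace.toDual ℝ (EuclideanSpace ℝ (Fin d)) (V a) := by
    ext h
    simp only [ContinuousLinearMap.add_apply, ContinuousLinearMap.sub_apply,
      ContinuousLinearMap.comp_apply, ContinuousLinearMap.prod_apply,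
      ContinuousLinearMap.smul_apply, ContinuousLinearMap.coe_id', id_eq,
      ContinuousLinearMap.zero_apply, fderivInnerCLM_apply,
      InnerProductSpace.toDual_apply_apply, smul_eq_mul]
    rw [real_inner_smul_left, real_inner_comm h (G θ), ← hsym a h, ha]
    ring
  constructor
  · exact hasGradientAt_iff_hasFDerivAt.mpr ((hL ▸ hFd).congr_of_eventuallyEq hEq)
  · intro W hW
    have hWV : W (V a) = a := by
      have h2 := ContinuousLinearMap.ext_iff.mp hW a
      simpa using h2
    show θp - lam⁻¹ • η = θ - lam⁻¹ • W (V a)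
    rw [hWV, ha, smul_add, smul_smul, inv_mul_cancel₀ hlam.ne', one_smul]
    abel
end

section
/- Let g : Θ → ℝ be strictly convex differentiable on convex open Θ, let θ₀, θ̂ ∈ Θ, Δθ = θ̂ − θ₀ ≠ 0, and kl_max > 0. Define a sequence t₀ = 0, and t_{i+1} = min(t_i + s_i, 1) where each step s_i > 0 is the largest value such that KL(θ₀ + t_{i+1}Δθ, θ₀ + t_iΔθ) ≤ kl_max (if the unconstrained step 1 − t_i satisfies the KL constraint, take t_{i+1} = 1). Let B = Δθ·(∇g(θ̂) − ∇g(θ₀)). Then whenever the constraint is active at step i (t_{i+1} < 1), we have t_{i+1} − t_i ≥ kl_max / B; consequently the sequence (t_i) reaches 1 in at most ⌈B / kl_max⌉ + 1 steps. -/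
open scoped RealInnerProductSpace

/-- For `g` strictly convex differentiable on convex open `Θ`,
`Δθ = θ̂ − θ₀ ≠ 0`, `kl_max > 0`, and the sequence `t₀ = 0`,
`t_{i+1} = min(t_i + s_i, 1)` with `s_i` the largest step such that
`KL(θ₀+t_{i+1}Δθ, θ₀+t_iΔθ) ≤ kl_max` (taking `t_{i+1} = 1` if the full step
satisfies the constraint), and `B = Δθ·(∇g(θ̂) − ∇g(θ₀))`: whenever the constraint
is active (`t_{i+1} < 1`) one has `t_{i+1} − t_i ≥ kl_max / B`, and `(t_i)` reaches
`1` in at most `⌈B / kl_max⌉ + 1` steps. -/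
theorem stmt7 {d : ℕ} (Θ : Set (EuclideanSpace ℝ (Fin d)))
    (hΘo : IsOpen Θ) (hΘc : Convex ℝ Θ)
    (g : EuclideanSpace ℝ (Fin d) → ℝ)
    (hconv : StrictConvexOn ℝ Θ g)
    (hdiff : ∀ x ∈ Θ, DifferentiableAt ℝ g x)
    (θ₀ θhat : EuclideanSpace ℝ (Fin d)) (hθ₀ : θ₀ ∈ Θ) (hθhat : θhat ∈ Θ)
    (Δθ : EuclideanSpace ℝ (Fin d)) (hΔθ : Δθ = θhat - θ₀) (hΔθ0 : Δθ ≠ 0)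
    (klmax : ℝ) (hkl : 0 < klmax)
    (KL : EuclideanSpace ℝ (Fin d) → EuclideanSpace ℝ (Fin d) → ℝ)
    (hKL : ∀ θ₂ θ₁, KL θ₂ θ₁ = ⟪θ₂ - θ₁, gradient g θ₂⟫ - g θ₂ + g θ₁)
    (B : ℝ) (hB : B = ⟪Δθ, gradient g θhat - gradient g θ₀⟫)
    (t : ℕ → ℝ)
    (ht0 : t 0 = 0) (hmono : Monotone t)
    (hrange : ∀ i, 0 ≤ t i ∧ t i ≤ 1)
    (hstep : ∀ i,
      (KL (θ₀ + (1 : ℝ) • Δθ) (θ₀ + t i • Δθ) ≤ klmax → t (i + 1) = 1) ∧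
      (¬ KL (θ₀ + (1 : ℝ) • Δθ) (θ₀ + t i • Δθ) ≤ klmax →
        t i < t (i + 1) ∧ t (i + 1) < 1 ∧
          KL (θ₀ + t (i + 1) • Δθ) (θ₀ + t i • Δθ) = klmax)) :
    (∀ i, t (i + 1) < 1 → klmax / B ≤ t (i + 1) - t i) ∧
      t (Nat.ceil (B / klmax) + 1) = 1 := by
  classical
  set l : ℝ → EuclideanSpace ℝ (Fin d) := fun s => θ₀ + s • Δθ with hl
  set S : Set ℝ := l ⁻¹' Θ with hS
  set D : ℝ → ℝ := fun s => ⟪Δθ, gradient g (l s)⟫ with hD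
  -- affine combination property of l
  have hlcomb : ∀ (a b x y : ℝ), a + b = 1 →
      l (a * x + b * y) = a • l x + b • l y := by
    intro a b x y hab
    simp only [hl]
    have h : a • (θ₀ + x • Δθ) + b • (θ₀ + y • Δθ)
        = (a + b) • θ₀ + (a * x + b * y) • Δθ := by
      match_scalars <;> ring
    rw [h, hab, one_smul]
  have hlinj : Function.Injective l := by
    intro x y h
    have h' : x • Δθ = y • Δθ := by
      simpa only [hl, add_right_inj] using h
    have h'' : (x - y) • Δθ = 0 := by rw [sub_smul, h', sub_self]
    rcases smul_eq_zero.1 h'' with h0 | h0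
    · exact sub_eq_zero.1 h0
    · exact absurd h0 hΔθ0
  have hl1 : l 1 = θhat := by
    show θ₀ + (1 : ℝ) • Δθ = θhat
    rw [one_smul, hΔθ]; abel
  have hl0 : l 0 = θ₀ := by simp [hl]
  -- membership of [0,1] in S
  have hmem : ∀ s : ℝ, 0 ≤ s → s ≤ 1 → s ∈ S := by
    intro s h0 h1
    have h := hlcomb (1 - s) s 0 1 (by ring)
    rw [mul_zero, mul_one, zero_add] at h
    show l s ∈ Θ
    rw [h, hl0, hl1]
    exact hΘc hθ₀ hθhat (by linarith) h0 (by ring)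
  -- strict convexity of g ∘ l on S
  have hSconv : Convex ℝ S := by
    intro x hx y hy a b ha hb hab
    show l (a * x + b * y) ∈ Θ
    rw [hlcomb a b x y hab]
    exact hΘc hx hy ha hb hab
  have hsc : StrictConvexOn ℝ S (g ∘ l) := by
    refine ⟨hSconv, fun x hx y hy hxy a b ha hb hab => ?_⟩
    have h1 : l (a * x + b * y) = a • l x + b • l y := hlcomb a b x y hab
    show g (l (a • x + b • y)) < a • g (l x) + b • g (l y)
    simp only [smul_eq_mul] at *
    rw [h1]
    exact hconv.2 hx hy (fun h => hxy (hlinj h)) ha hb hab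
  -- derivative of g ∘ l
  have hderiv : ∀ s : ℝ, s ∈ S → HasDerivAt (g ∘ l) (D s) s := by
    intro s hs
    have hg : HasGradientAt g (gradient g (l s)) (l s) :=
      (hdiff _ hs).hasGradientAt
    have hfd : HasFDerivAt g
        ((InnerProductSpace.toDual ℝ (EuclideanSpace ℝ (Fin d))) (gradient g (l s))) (l s) :=
      hasGradientAt_iff_hasFDerivAt.1 hg
    have hline : HasDerivAt l Δθ s := by
      have h1 : HasDerivAt (fun u : ℝ => u • Δθ) ((1 : ℝ) • Δθ) s :=
        (hasDerivAt_id s).smul_const Δθ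
      simpa [hl] using h1.const_add θ₀
    have := hfd.comp_hasDerivAt s hline
    simpa [hD, InnerProductSpace.toDual_apply_apply, real_inner_comm, mul_comm] using this
  -- monotonicity of D on S
  have hDlt : ∀ s₁ s₂ : ℝ, s₁ ∈ S → s₂ ∈ S → s₁ < s₂ → D s₁ < D s₂ := by
    intro s₁ s₂ h1 h2 h12
    have ha := hsc.lt_slope_of_hasDerivAt h1 h2 h12 (hderiv s₁ h1)
    have hb := hsc.slope_lt_of_hasDerivAt h1 h2 h12 (hderiv s₂ h2)
    exact lt_trans ha hb
  have hDle : ∀ s₁ s₂ : ℝ, s₁ ∈ S → s₂ ∈ S → s₁ ≤ s₂ → D s₁ ≤ D s₂ := by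
    intro s₁ s₂ h1 h2 h12
    rcases lt_or_eq_of_le h12 with h | h
    · exact (hDlt s₁ s₂ h1 h2 h).le
    · rw [h]
  have hD1e : D 1 = ⟪Δθ, gradient g θhat⟫ := by simp only [hD, hl1]
  have hD0e : D 0 = ⟪Δθ, gradient g θ₀⟫ := by simp only [hD, hl0]
  have hBD : B = D 1 - D 0 := by
    rw [hB, hD1e, hD0e, inner_sub_right]
  have hBpos : 0 < B := by
    rw [hBD]
    have := hDlt 0 1 (hmem 0 le_rfl zero_le_one) (hmem 1 zero_le_one le_rfl) one_pos
    linarith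
  -- KL upper bound along the segment
  have hKLb : ∀ t₁ t₂ : ℝ, 0 ≤ t₁ → t₁ < t₂ → t₂ ≤ 1 →
      KL (l t₂) (l t₁) ≤ (t₂ - t₁) * B := by
    intro t₁ t₂ h0 h12 h1
    have hm1 : t₁ ∈ S := hmem t₁ h0 (by linarith)
    have hm2 : t₂ ∈ S := hmem t₂ (by linarith) h1
    have hslope := hsc.lt_slope_of_hasDerivAt hm1 hm2 h12 (hderiv t₁ hm1)
    rw [slope_def_field] at hslope
    have hgl : (t₂ - t₁) * D t₁ < g (l t₂) - g (l t₁) := by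
      have ht : 0 < t₂ - t₁ := by linarith
      calc (t₂ - t₁) * D t₁ < (t₂ - t₁) * (((g ∘ l) t₂ - (g ∘ l) t₁) / (t₂ - t₁)) := by
            exact (mul_lt_mul_iff_right₀ ht).2 hslope
        _ = g (l t₂) - g (l t₁) := by field_simp; rfl
    have hinner : ⟪l t₂ - l t₁, gradient g (l t₂)⟫ = (t₂ - t₁) * D t₂ := by
      have hdif : l t₂ - l t₁ = (t₂ - t₁) • Δθ := by
        simp only [hl, sub_smul]; abel
      rw [hdif, real_inner_smul_left]
    rw [hKL, hinner]
    have hD1 : D t₂ ≤ D 1 := hDle t₂ 1 hm2 (hmem 1 zero_le_one le_rfl) h1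
    have hD0 : D 0 ≤ D t₁ := hDle 0 t₁ (hmem 0 le_rfl zero_le_one) hm1 h0
    have ht : 0 < t₂ - t₁ := by linarith
    nlinarith [hBD]
  -- part 1
  have part1 : ∀ i, t (i + 1) < 1 → klmax / B ≤ t (i + 1) - t i := by
    intro i hi
    rcases hstep i with ⟨h1, h2⟩
    by_cases hc : KL (θ₀ + (1 : ℝ) • Δθ) (θ₀ + t i • Δθ) ≤ klmax
    · exact absurd (h1 hc) (by linarith)
    · obtain ⟨hlt, hlt1, heq⟩ := h2 hc
      have hb := hKLb (t i) (t (i + 1)) (hrange i).1 hlt hlt1.le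
      have : klmax ≤ (t (i + 1) - t i) * B := by
        rw [← heq]; exact hb
      rw [div_le_iff₀ hBpos]
      linarith
  refine ⟨part1, ?_⟩
  set N : ℕ := Nat.ceil (B / klmax) + 1 with hN
  have hNge : B / klmax + 1 ≤ (N : ℝ) := by
    rw [hN]; push_cast
    have := Nat.le_ceil (B / klmax)
    linarith
  by_contra hcon
  have htN : t N < 1 := lt_of_le_of_ne (hrange N).2 hcon
  have hgap : ∀ i < N, klmax / B ≤ t (i + 1) - t i := by
    intro i hi
    apply part1
    have : t (i + 1) ≤ t N := hmono (by omega)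
    linarith
  have hsum : t N = ∑ i ∈ Finset.range N, (t (i + 1) - t i) := by
    rw [Finset.sum_range_sub, ht0, sub_zero]
  have hlow : (N : ℝ) * (klmax / B) ≤ t N := by
    rw [hsum]
    calc (N : ℝ) * (klmax / B) = ∑ _i ∈ Finset.range N, klmax / B := by
          rw [Finset.sum_const, Finset.card_range, nsmul_eq_mul]
      _ ≤ ∑ i ∈ Finset.range N, (t (i + 1) - t i) :=
          Finset.sum_le_sum (fun i hi => hgap i (Finset.mem_range.1 hi))
  have hq : 0 < klmax / B := div_pos hkl hBpos
  have h1 : (B / klmax + 1) * (klmax / B) ≤ (N : ℝ) * (klmax / B) :=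
    mul_le_mul_of_nonneg_right hNge hq.le
  have h2 : (B / klmax + 1) * (klmax / B) = 1 + klmax / B := by
    field_simp
  linarith
end

section
/- Let Π = {π_θ : θ ∈ Θ} be a family of probability measures with Θ ⊆ ℝ^d open and connected, dπ_θ/dπ_ref = exp(ℓ(θ, x)) with θ ↦ ℓ(θ, x) twice continuously differentiable for all x. Suppose there exists a finite-dimensional function space F, spanned by linearly independent functions T₁, …, T_m, T_{m+1} = 1, such that ∂_θ ℓ(θ, ·) ∈ F^d for all θ ∈ Θ (each partial derivative of ℓ in θ lies in F as a function of x). If Θ is additionally simply connected, then there exist functions β : Θ → ℝ^m, g : Θ → ℝ, and h : X → ℝ such that ℓ(θ, x) = β(θ)·T(x) − g(θ) + h(x) for all θ, x; i.e., Π is a (curved) exponential family with sufficient statistic T = (T₁,…,T_m). -/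
open MeasureTheory

/-- A function with vanishing derivative on an open preconnected set is constant there. -/
private lemma aux_const_of_deriv_zero {d : ℕ} {s : Set (EuclideanSpace ℝ (Fin d))}
    (hs : IsOpen s) (hconn : IsPreconnected s) {f : EuclideanSpace ℝ (Fin d) → ℝ}
    (hf : ∀ θ ∈ s, HasFDerivAt f (0 : EuclideanSpace ℝ (Fin d) →L[ℝ] ℝ) θ)
    {a b : EuclideanSpace ℝ (Fin d)} (ha : a ∈ s) (hb : b ∈ s) : f a = f b := by
  have loc : ∀ θ ∈ s, ∃ ε > 0, Metric.ball θ ε ⊆ s ∧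
      ∀ y ∈ Metric.ball θ ε, f y = f θ := by
    intro θ hθ
    obtain ⟨ε, hε, hball⟩ := Metric.isOpen_iff.mp hs θ hθ
    refine ⟨ε, hε, hball, fun y hy => ?_⟩
    exact (convex_ball θ ε).is_const_of_fderivWithin_eq_zero
      (fun z hz => ((hf z (hball hz)).differentiableAt).differentiableWithinAt)
      (fun z hz => by
        rw [fderivWithin_of_isOpen Metric.isOpen_ball hz]
        exact (hf z (hball hz)).fderiv)
      hy (Metric.mem_ball_self hε)
  set u : Set (EuclideanSpace ℝ (Fin d)) := {θ | θ ∈ s ∧ f θ = f b} with hu_def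
  set w : Set (EuclideanSpace ℝ (Fin d)) := {θ | θ ∈ s ∧ f θ ≠ f b} with hw_def
  have hu : IsOpen u := by
    rw [Metric.isOpen_iff]
    rintro θ ⟨hθs, hθf⟩
    obtain ⟨ε, hε, hball, hconst⟩ := loc θ hθs
    exact ⟨ε, hε, fun y hy => ⟨hball hy, (hconst y hy).trans hθf⟩⟩
  have hw : IsOpen w := by
    rw [Metric.isOpen_iff]
    rintro θ ⟨hθs, hθf⟩
    obtain ⟨ε, hε, hball, hconst⟩ := loc θ hθs
    exact ⟨ε, hε, fun y hy => ⟨hball hy, by rw [hconst y hy]; exact hθf⟩⟩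
  have hdisj : Disjoint u w := by
    rw [Set.disjoint_left]
    rintro θ ⟨_, h1⟩ ⟨_, h2⟩
    exact h2 h1
  have hcover : s ⊆ u ∪ w := by
    intro θ hθ
    by_cases h : f θ = f b
    · exact Or.inl ⟨hθ, h⟩
    · exact Or.inr ⟨hθ, h⟩
  have hne : (s ∩ u).Nonempty := ⟨b, hb, hb, rfl⟩
  exact (hconn.subset_left_of_subset_union hu hw hdisj hcover hne ha).2

/-- If a smoothly parameterized family `dπ_θ/dπ_ref = exp(ℓ(θ,x))`
on open, connected, simply connected `Θ ⊆ ℝ^d` is such that every θ-partial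
derivative of `ℓ` lies (as a function of `x`) in the finite-dimensional space
spanned by linearly independent functions `T₁, …, T_m, T_{m+1} = 1`, then the
family is a (curved) exponential family:
`ℓ(θ,x) = β(θ)·T(x) − g(θ) + h(x)`. -/
theorem stmt11 {X : Type*} [MeasurableSpace X] {d m : ℕ}
    (πref : Measure X) [IsProbabilityMeasure πref]
    (Θ : Set (EuclideanSpace ℝ (Fin d)))
    (hΘo : IsOpen Θ) (hΘconn : IsConnected Θ) (hΘsc : SimplyConnectedSpace Θ)
    (ℓ : EuclideanSpace ℝ (Fin d) → X → ℝ)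
    (hC2 : ∀ x, ContDiffOn ℝ 2 (fun θ => ℓ θ x) Θ)
    (π : EuclideanSpace ℝ (Fin d) → Measure X)
    (hπ : ∀ θ, π θ = πref.withDensity (fun x => ENNReal.ofReal (Real.exp (ℓ θ x))))
    (hprob : ∀ θ ∈ Θ, IsProbabilityMeasure (π θ))
    (T : Fin m → X → ℝ)
    (hTindep : LinearIndependent ℝ (Fin.snoc T (fun _ => (1 : ℝ)) : Fin (m + 1) → X → ℝ))
    (hspan : ∀ θ ∈ Θ, ∀ i : Fin d,
      (fun x => fderiv ℝ (fun θ' => ℓ θ' x) θ (EuclideanSpace.single i 1)) ∈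
        Submodule.span ℝ (Set.range (Fin.snoc T (fun _ => (1 : ℝ)) : Fin (m + 1) → X → ℝ))) :
    ∃ (β : EuclideanSpace ℝ (Fin d) → Fin m → ℝ)
      (g : EuclideanSpace ℝ (Fin d) → ℝ) (h : X → ℝ),
      ∀ θ ∈ Θ, ∀ x, ℓ θ x = (∑ i, β θ i * T i x) - g θ + h x := by
  classical
  obtain ⟨θ₀, hθ₀⟩ := hΘconn.nonempty
  set S : Fin (m + 1) → X → ℝ := Fin.snoc T (fun _ => (1 : ℝ)) with hS
  -- evaluation vectors in Euclidean space
  set v : X → EuclideanSpace ℝ (Fin (m + 1)) := fun x => WithLp.toLp 2 (fun k => S k x) with hv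
  -- Step 1: the evaluation vectors span everything (by linear independence of S)
  have hU : Submodule.span ℝ (Set.range v) = ⊤ := by
    apply Submodule.orthogonal_eq_bot_iff.mp
    rw [Submodule.eq_bot_iff]
    intro b hb
    have hx : ∀ x : X, ∑ k, b k * S k x = 0 := by
      intro x
      have h0 := (Submodule.mem_orthogonal _ b).mp hb (v x)
        (Submodule.subset_span ⟨x, rfl⟩)
      have : ∑ k, v x k * b k = 0 := by
        simpa [PiLp.inner_apply, RCLike.inner_apply, hv, mul_comm] using h0
      rw [← this]
      exact Finset.sum_congr rfl fun k _ => mul_comm _ _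
    have hz : ∑ k, b k • S k = 0 := by
      funext x
      simpa [Finset.sum_apply] using hx x
    have hb0 := Fintype.linearIndependent_iff.mp hTindep (fun k => b k) hz
    ext k
    exact hb0 k
  -- Step 2: extract finitely many evaluation points
  obtain ⟨s, hs_sub, hs_span, hs_ind⟩ := exists_linearIndependent ℝ (Set.range v)
  have hs_fin : s.Finite := hs_ind.setFinite
  set N := hs_fin.toFinset.card with hN
  have hch : ∀ j : Fin N, ∃ x : X,
      v x = (hs_fin.toFinset.equivFin.symm j : EuclideanSpace ℝ (Fin (m + 1))) := by
    intro j
    have hmem : ((hs_fin.toFinset.equivFin.symm j : EuclideanSpace ℝ (Fin (m + 1)))) ∈ s := by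
      have := (hs_fin.toFinset.equivFin.symm j).2
      simpa using hs_fin.mem_toFinset.mp this
    exact hs_sub hmem
  choose e he using hch
  have hs_sub2 : s ⊆ Set.range (v ∘ e) := by
    intro y hy
    refine ⟨hs_fin.toFinset.equivFin ⟨y, hs_fin.mem_toFinset.mpr hy⟩, ?_⟩
    simp [he]
  have htop : (⊤ : Submodule ℝ (EuclideanSpace ℝ (Fin (m + 1)))) ≤
      Submodule.span ℝ (Set.range (v ∘ e)) := by
    calc (⊤ : Submodule ℝ (EuclideanSpace ℝ (Fin (m + 1))))
        = Submodule.span ℝ (Set.range v) := hU.symm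
      _ = Submodule.span ℝ s := hs_span.symm
      _ ≤ Submodule.span ℝ (Set.range (v ∘ e)) := Submodule.span_mono hs_sub2
  -- Step 3: the evaluation (interpolation) operator and its left inverse
  set A : (Fin (m + 1) → ℝ) →ₗ[ℝ] (Fin N → ℝ) :=
    { toFun := fun b j => ∑ k, S k (e j) * b k
      map_add' := by
        intro b b'
        funext j
        simp [mul_add, Finset.sum_add_distrib]
      map_smul' := by
        intro r b
        funext j
        simp only [Pi.smul_apply, smul_eq_mul, RingHom.id_apply]
        rw [Finset.mul_sum]
        exact Finset.sum_congr rfl fun k _ => by ring } with hA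
  have hAapp : ∀ b j, A b j = ∑ k, S k (e j) * b k := fun b j => rfl
  have hAinj : LinearMap.ker A = ⊥ := by
    rw [LinearMap.ker_eq_bot']
    intro b hb
    set b' : EuclideanSpace ℝ (Fin (m + 1)) := WithLp.toLp 2 b with hb'
    have hker : Submodule.span ℝ (Set.range (v ∘ e)) ≤ LinearMap.ker ((innerSL ℝ b' : EuclideanSpace ℝ (Fin (m + 1)) →ₗ[ℝ] ℝ)) := by
      rw [Submodule.span_le]
      rintro _ ⟨j, rfl⟩
      have hAbj : (∑ k, S k (e j) * b k) = 0 := congrFun hb j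
      simp only [SetLike.mem_coe, LinearMap.mem_ker, ContinuousLinearMap.coe_coe,
        innerSL_apply_apply]
      have : (inner ℝ b' ((v ∘ e) j) : ℝ) = ∑ k, b k * S k (e j) := by
        simp [PiLp.inner_apply, RCLike.inner_apply, hv, hb', mul_comm]
      rw [this, ← hAbj]
      exact Finset.sum_congr rfl fun k _ => mul_comm _ _
    have hbb : (inner ℝ b' b' : ℝ) = 0 := by
      have hmem : b' ∈ (⊤ : Submodule ℝ (EuclideanSpace ℝ (Fin (m + 1)))) :=
        Submodule.mem_top
      have := hker (htop hmem)
      simpa using this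
    have : b' = 0 := inner_self_eq_zero.mp hbb
    exact congrArg WithLp.ofLp this
  obtain ⟨ψ, hψ⟩ := A.exists_leftInverse_of_injective hAinj
  have hψA : ∀ b, ψ (A b) = b := fun b => LinearMap.congr_fun hψ b
  -- Step 4: the coefficient map and its derivative structure
  set c : EuclideanSpace ℝ (Fin d) → (Fin (m + 1) → ℝ) :=
    fun θ => ψ (fun j => ℓ θ (e j)) with hc
  have hD : ∀ (x : X), ∀ θ ∈ Θ,
      HasFDerivAt (fun θ' => ℓ θ' x) (fderiv ℝ (fun θ' => ℓ θ' x) θ) θ := by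
    intro x θ hθ
    exact (((hC2 x).differentiableOn (by norm_num)).differentiableAt
      (hΘo.mem_nhds hθ)).hasFDerivAt
  -- key coefficient identity coming from hspan
  have hkey : ∀ θ ∈ Θ, ∀ i : Fin d, ∀ y : X,
      fderiv ℝ (fun θ' => ℓ θ' y) θ (EuclideanSpace.single i 1)
        = ∑ k, S k y *
            ψ (fun j => fderiv ℝ (fun θ' => ℓ θ' (e j)) θ (EuclideanSpace.single i 1)) k := by
    intro θ hθ i y
    obtain ⟨b, hbspan⟩ := (Submodule.mem_span_range_iff_exists_fun ℝ).mp (hspan θ hθ i)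
    have hval : ∀ x : X,
        fderiv ℝ (fun θ' => ℓ θ' x) θ (EuclideanSpace.single i 1) = ∑ k, b k * S k x := by
      intro x
      have := congrFun hbspan x
      simp only [Finset.sum_apply, Pi.smul_apply, smul_eq_mul] at this
      rw [← this]
    have harg : (fun j => fderiv ℝ (fun θ' => ℓ θ' (e j)) θ (EuclideanSpace.single i 1))
        = A b := by
      funext j
      rw [hval, hAapp]
      exact Finset.sum_congr rfl fun k _ => mul_comm _ _
    rw [harg, hψA, hval y]
    exact Finset.sum_congr rfl fun k _ => mul_comm _ _
  -- Step 5: θ-derivative of the remainder vanishes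
  set ψc : (Fin N → ℝ) →L[ℝ] (Fin (m + 1) → ℝ) := LinearMap.toContinuousLinearMap ψ with hψc
  have hF0 : ∀ y : X, ∀ θ ∈ Θ,
      HasFDerivAt (fun θ' => ℓ θ' y - ∑ k, c θ' k * S k y)
        (0 : EuclideanSpace ℝ (Fin d) →L[ℝ] ℝ) θ := by
    intro y θ hθ
    set Dj : Fin N → (EuclideanSpace ℝ (Fin d) →L[ℝ] ℝ) :=
      fun j => fderiv ℝ (fun θ' => ℓ θ' (e j)) θ with hDj
    have hpi : HasFDerivAt (fun θ' => (fun j => ℓ θ' (e j)))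
        (ContinuousLinearMap.pi Dj) θ :=
      hasFDerivAt_pi.mpr fun j => hD (e j) θ hθ
    have hc' : HasFDerivAt c (ψc.comp (ContinuousLinearMap.pi Dj)) θ :=
      (ψc.hasFDerivAt).comp θ hpi
    set C := ψc.comp (ContinuousLinearMap.pi Dj) with hC
    have hsum : HasFDerivAt (fun θ' => ∑ k, c θ' k * S k y)
        (∑ k, S k y • ((ContinuousLinearMap.proj k).comp C)) θ :=
      HasFDerivAt.fun_sum fun k _ => (hasFDerivAt_pi'.mp hc' k).mul_const (S k y)
    have hsub := (hD y θ hθ).sub hsum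
    have hzero : fderiv ℝ (fun θ' => ℓ θ' y) θ
        - ∑ k, S k y • ((ContinuousLinearMap.proj k).comp C) = 0 := by
      refine ContinuousLinearMap.coe_injective
        (Module.Basis.ext (EuclideanSpace.basisFun (Fin d) ℝ).toBasis fun i => ?_)
      simp only [OrthonormalBasis.coe_toBasis, EuclideanSpace.basisFun_apply,
        ContinuousLinearMap.coe_sub', Pi.sub_apply, ContinuousLinearMap.coe_coe,
        ContinuousLinearMap.coe_sum', Finset.sum_apply, ContinuousLinearMap.coe_smul',
        Pi.smul_apply, ContinuousLinearMap.coe_comp', Function.comp_apply,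
        ContinuousLinearMap.proj_apply, smul_eq_mul, LinearMap.zero_apply, hC,
        ContinuousLinearMap.pi_apply, hψc, LinearMap.coe_toContinuousLinearMap', hDj,
        ContinuousLinearMap.zero_apply, ContinuousLinearMap.coe_zero, Pi.zero_apply]
      rw [sub_eq_zero]
      exact hkey θ hθ i y
    rwa [hzero] at hsub
  -- Step 6: conclude by constancy on the connected open set Θ
  have key : ∀ θ ∈ Θ, ∀ y : X,
      ℓ θ y - ∑ k, c θ k * S k y = ℓ θ₀ y - ∑ k, c θ₀ k * S k y := by
    intro θ hθ y
    exact aux_const_of_deriv_zero hΘo hΘconn.isPreconnected (hF0 y) hθ hθ₀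
  refine ⟨fun θ i => c θ (Fin.castSucc i), fun θ => -(c θ (Fin.last m)),
    fun y => ℓ θ₀ y - ∑ k, c θ₀ k * S k y, ?_⟩
  intro θ hθ x
  have h1 := key θ hθ x
  have h2 : ∑ k, c θ k * S k x
      = (∑ i, c θ (Fin.castSucc i) * T i x) + c θ (Fin.last m) := by
    rw [Fin.sum_univ_castSucc]
    simp [hS]
  show ℓ θ x = (∑ i, c θ (Fin.castSucc i) * T i x) - (-(c θ (Fin.last m)))
    + (ℓ θ₀ x - ∑ k, c θ₀ k * S k x)
  linarith [h1, h2]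
end
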